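/- Let μ₁, μ₂ be real numbers and W : ℝ → ℝ be given by W(λ) = (μ₁/2)(λ⁻⁴ + 2λ² − 3) + 2μ₂(λ² + 2λ⁻¹ − 3). Then for every t > 1 the function λ ↦ W'(λ)/(λ³ − 1) is integrable on (t, ∞) and t² ∫_{t}^{∞} W'(λ)/(λ³ − 1) dλ = 2μ₁(t + t⁻²/4) + 4μ₂ t. -/

import Mathlib

open Real MeasureTheory Set Filter

/-- Closed form of the dead load sustaining a cavity, for the two-term model
with exponents m = 1, n = −1/2: for every t > 1, the cavitation integrand is
integrable on (t, ∞) and t² ∫ₜ^∞ W'(λ)/(λ³−1) dλ = 2μ₁(t + t⁻²/4) + 4μ₂t. -/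
theorem deadload_closed_form (μ₁ μ₂ : ℝ) (W : ℝ → ℝ)
    (hW : ∀ l : ℝ, W l = μ₁ / 2 * (l ^ (-4 : ℤ) + 2 * l ^ 2 - 3)
        + 2 * μ₂ * (l ^ 2 + 2 * l⁻¹ - 3)) :
    ∀ t : ℝ, 1 < t →
      IntegrableOn (fun l => deriv W l / (l ^ 3 - 1)) (Ioi t) ∧
      t ^ 2 * ∫ l in Ioi t, deriv W l / (l ^ 3 - 1) =
        2 * μ₁ * (t + t ^ (-2 : ℤ) / 4) + 4 * μ₂ * t := by
  intro t ht
  have ht0 : (0:ℝ) < t := lt_trans one_pos ht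
  have hWfun : W = fun l : ℝ => μ₁ / 2 * (l ^ (-4 : ℤ) + 2 * l ^ 2 - 3)
        + 2 * μ₂ * (l ^ 2 + 2 * l⁻¹ - 3) := funext hW
  have hDeriv : ∀ l : ℝ, l ≠ 0 →
      deriv W l = 2 * μ₁ * (l - l ^ (-5 : ℤ)) + 4 * μ₂ * (l - l ^ (-2 : ℤ)) := by
    intro l hl
    have h1 : HasDerivAt (fun x : ℝ => x ^ (-4 : ℤ)) ((-4 : ℤ) * l ^ (-5 : ℤ)) l := by
      simpa using hasDerivAt_zpow (-4) l (Or.inl hl)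
    have h2 : HasDerivAt (fun x : ℝ => x ^ 2) (2 * l) l := by
      simpa using hasDerivAt_pow 2 l
    have h3 : HasDerivAt (fun x : ℝ => x⁻¹) (-(l ^ 2)⁻¹) l := hasDerivAt_inv hl
    have hA : HasDerivAt W
        (μ₁ / 2 * ((-4 : ℤ) * l ^ (-5 : ℤ) + 2 * (2 * l))
          + 2 * μ₂ * (2 * l + 2 * (-(l ^ 2)⁻¹))) l := by
      rw [hWfun]
      exact (((h1.add (h2.const_mul 2)).sub_const 3).const_mul (μ₁ / 2)).add
        (((h2.add (h3.const_mul 2)).sub_const 3).const_mul (2 * μ₂))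
    rw [hA.deriv]
    have h4 : (l ^ 2)⁻¹ = l ^ (-2 : ℤ) := by
      rw [zpow_neg]; norm_cast
    rw [h4]; push_cast; ring
  set g : ℝ → ℝ := fun l => 2 * μ₁ * (l ^ (-2 : ℝ) + l ^ (-5 : ℝ)) + 4 * μ₂ * l ^ (-2 : ℝ)
    with hg
  have hEq : ∀ l ∈ Ioi t, deriv W l / (l ^ 3 - 1) = g l := by
    intro l hl
    have hl1 : (1:ℝ) < l := lt_trans ht hl
    have hl0 : (0:ℝ) < l := lt_trans one_pos hl1
    have hlne : l ≠ 0 := ne_of_gt hl0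
    have hcube : l ^ 3 - 1 ≠ 0 := by
      have : (1:ℝ) < l ^ 3 := one_lt_pow₀ hl1 (by norm_num)
      exact sub_ne_zero.mpr (ne_of_gt this)
    rw [hDeriv l hlne]
    simp only [hg]
    rw [show (-2 : ℝ) = ((-2 : ℤ) : ℝ) by norm_num,
      show (-5 : ℝ) = ((-5 : ℤ) : ℝ) by norm_num, Real.rpow_intCast, Real.rpow_intCast]
    have e5 : l ^ (-5 : ℤ) = (l ^ 5)⁻¹ := by rw [zpow_neg]; norm_cast
    have e2 : l ^ (-2 : ℤ) = (l ^ 2)⁻¹ := by rw [zpow_neg]; norm_cast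
    rw [e5, e2]
    field_simp
    ring
  have hi2 : IntegrableOn (fun l : ℝ => l ^ (-2 : ℝ)) (Ioi t) :=
    integrableOn_Ioi_rpow_of_lt (by norm_num) ht0
  have hi5 : IntegrableOn (fun l : ℝ => l ^ (-5 : ℝ)) (Ioi t) :=
    integrableOn_Ioi_rpow_of_lt (by norm_num) ht0
  have hig : IntegrableOn g (Ioi t) := by
    exact (((hi2.add hi5).const_mul (2 * μ₁)).add (hi2.const_mul (4 * μ₂)))
  constructor
  · exact hig.congr_fun (fun l hl => (hEq l hl).symm) measurableSet_Ioi
  · rw [setIntegral_congr_fun measurableSet_Ioi hEq]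
    have h2v : ∫ l in Ioi t, l ^ (-2 : ℝ) = t ^ (-1 : ℝ) := by
      rw [integral_Ioi_rpow_of_lt (by norm_num) ht0]; norm_num
    have h5v : ∫ l in Ioi t, l ^ (-5 : ℝ) = t ^ (-4 : ℝ) / 4 := by
      rw [integral_Ioi_rpow_of_lt (by norm_num) ht0]; norm_num
    have hiA : IntegrableOn (fun l : ℝ => 2 * μ₁ * (l ^ (-2 : ℝ) + l ^ (-5 : ℝ))) (Ioi t) := by
      exact (hi2.add hi5).const_mul (2 * μ₁)
    have hiB : IntegrableOn (fun l : ℝ => 4 * μ₂ * l ^ (-2 : ℝ)) (Ioi t) := by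
      exact hi2.const_mul (4 * μ₂)
    simp only [hg]
    rw [integral_add hiA hiB, integral_const_mul, integral_const_mul,
      integral_add hi2 hi5, h2v, h5v]
    have e1 : t ^ (-1 : ℝ) = t⁻¹ := by
      rw [show (-1 : ℝ) = ((-1 : ℤ) : ℝ) by norm_num, Real.rpow_intCast, zpow_neg_one]
    have e4 : t ^ (-4 : ℝ) = (t ^ 4)⁻¹ := by
      rw [show (-4 : ℝ) = ((-4 : ℤ) : ℝ) by norm_num, Real.rpow_intCast, zpow_neg]
      norm_cast
    have e2' : t ^ (-2 : ℤ) = (t ^ 2)⁻¹ := by rw [zpow_neg]; norm_cast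
    rw [e1, e4, e2']
    have htne : t ≠ 0 := ne_of_gt ht0
    field_simp
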